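/- (Comparison with the doubly robust estimator run on-policy) Let b*_t(s,a) = q_{π,t}(s,a), let μ* = μ^{*,b*}, and let u^{b*} denote u defined with baseline b*. For every t and s: Var( G^{b*}(τ^π_{t:T−1}) | S_t = s ) − Var( G^{b*}(τ^{μ*}_{t:T−1}) | S_t = s ) = Var_{a∼π_t(·|s)}( √(u^{b*}_t(s,a)) ) + δ^{DR}_t(s), where δ^{DR}_{T−1}(s) = 0 and, for t ≤ T−2, δ^{DR}_t(s) = E_{a∼π_t(·|s), s'∼p(·|s,a)}[ Var(G^{b*}(τ^π_{t+1:T−1}) | S_{t+1}=s') − Var(G^{b*}(τ^{μ*}_{t+1:T−1}) | S_{t+1}=s') ]; moreover δ^{DR}_t(s) ≥ 0 for all t and s. -/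

import Mathlib

open Finset

namespace DOpt

variable {S A : Type}

/-- A time-indexed policy: for each time step and state, a probability distribution on actions. -/
def IsPolicy [Fintype A] (μ : ℕ → S → A → ℝ) : Prop :=
  ∀ t s, (∀ a, 0 ≤ μ t s a) ∧ ∑ a, μ t s a = 1

/-- A transition probability kernel on the finite state space. -/
def IsKernel [Fintype S] (p : S → A → S → ℝ) : Prop :=
  ∀ s a, (∀ s', 0 ≤ p s a s') ∧ ∑ s', p s a s' = 1

/-- Action value `q_{π,t}(s,a)` computed with `n` remaining transitions after time `t`
(`n = T - 1 - t` in a horizon-`T` MDP). -/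
noncomputable def qval [Fintype S] [Fintype A] (p : S → A → S → ℝ) (π : ℕ → S → A → ℝ)
    (r : S → A → ℝ) : ℕ → ℕ → S → A → ℝ
  | 0, _, s, a => r s a
  | n + 1, t, s, a =>
      r s a + ∑ s', p s a s' * ∑ a', π (t + 1) s' a' * qval p π r n (t + 1) s' a'

/-- `q_{π,t}(s,a)` in the horizon-`T` MDP. -/
noncomputable def qf [Fintype S] [Fintype A] (T : ℕ) (p : S → A → S → ℝ)
    (π : ℕ → S → A → ℝ) (r : S → A → ℝ) (t : ℕ) (s : S) (a : A) : ℝ :=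
  qval p π r (T - 1 - t) t s a

/-- `v_{π,t}(s) = Σ_a π_t(a|s) q_{π,t}(s,a)`. -/
noncomputable def vf [Fintype S] [Fintype A] (T : ℕ) (p : S → A → S → ℝ)
    (π : ℕ → S → A → ℝ) (r : S → A → ℝ) (t : ℕ) (s : S) : ℝ :=
  ∑ a, π t s a * qf T p π r t s a

/-- `ν_{π,t}(s,a) = Var_{s' ∼ p(·|s,a)}(v_{π,t+1}(s'))` for `t ≤ T-2`, and `0` at `t = T-1`. -/
noncomputable def nuf [Fintype S] [Fintype A] (T : ℕ) (p : S → A → S → ℝ)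
    (π : ℕ → S → A → ℝ) (r : S → A → ℝ) (t : ℕ) (s : S) (a : A) : ℝ :=
  if t + 2 ≤ T then
    (∑ s', p s a s' * (vf T p π r (t + 1) s') ^ 2) -
      (∑ s', p s a s' * vf T p π r (t + 1) s') ^ 2
  else 0

/-- Trajectories with `n` further transitions after the first action:
`(a_t, s_{t+1}, a_{t+1}, …, s_{t+n}, a_{t+n})`. -/
def Traj (S A : Type) : ℕ → Type
  | 0 => A
  | n + 1 => A × S × Traj S A n

/-- Expectation, over trajectories generated by the behavior policy `μ` starting at time `t`
in state `s` with `n` further transitions, of a function `f` of the trajectory. -/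
noncomputable def Exp [Fintype S] [Fintype A] (p : S → A → S → ℝ) (μ : ℕ → S → A → ℝ) :
    (n : ℕ) → ℕ → S → (Traj S A n → ℝ) → ℝ
  | 0, t, s, f => ∑ a, μ t s a * f a
  | n + 1, t, s, f =>
      ∑ a, μ t s a * ∑ s', p s a s' * Exp p μ n (t + 1) s' (fun τ => f (a, s', τ))

/-- Conditional variance of a function of the trajectory, given `S_t = s`. -/
noncomputable def Var [Fintype S] [Fintype A] (p : S → A → S → ℝ) (μ : ℕ → S → A → ℝ)
    (n : ℕ) (t : ℕ) (s : S) (f : Traj S A n → ℝ) : ℝ :=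
  Exp p μ n t s (fun τ => (f τ) ^ 2) - (Exp p μ n t s f) ^ 2

/-- `b̄_t(s) = Σ_a π_t(a|s) b_t(s,a)`. -/
noncomputable def bbar [Fintype A] (π : ℕ → S → A → ℝ) (b : ℕ → S → A → ℝ)
    (t : ℕ) (s : S) : ℝ :=
  ∑ a, π t s a * b t s a

/-- The per-decision importance-sampling estimator `G^b` with baseline `b`, target policy `π`
and behavior policy `μ`, as a function of the trajectory from time `t` (with `n` further
transitions, `n = T - 1 - t`). -/
noncomputable def Gest [Fintype S] [Fintype A] (π μ : ℕ → S → A → ℝ) (r : S → A → ℝ)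
    (b : ℕ → S → A → ℝ) : (n : ℕ) → ℕ → S → Traj S A n → ℝ
  | 0, t, s, a => (π t s a / μ t s a) * (r s a - b t s a) + bbar π b t s
  | n + 1, t, s, (a, s', τ) =>
      (π t s a / μ t s a) * (r s a + Gest π μ r b n (t + 1) s' τ - b t s a) + bbar π b t s

/-- Normalization of a weight vector into a probability distribution; the uniform distribution
when the total weight vanishes. -/
noncomputable def normPol [Fintype A] (w : A → ℝ) (a : A) : ℝ :=
  if (∑ a', w a') = 0 then ((Fintype.card A : ℝ))⁻¹ else w a / ∑ a', w a'

/-- `u_{π,t}(s,a)` (with baseline `b`), defined backwards in time together with the optimal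
behavior policy `μ*`; the first argument is the number `n = T - 1 - t` of remaining
transitions after time `t`. -/
noncomputable def uAux [Fintype S] [Fintype A] (T : ℕ) (p : S → A → S → ℝ)
    (π : ℕ → S → A → ℝ) (r : S → A → ℝ) (b : ℕ → S → A → ℝ) :
    ℕ → ℕ → S → A → ℝ
  | 0, t, s, a => (qf T p π r t s a - b t s a) ^ 2
  | n + 1, t, s, a =>
      (qf T p π r t s a - b t s a) ^ 2 + nuf T p π r t s a +
        ∑ s', p s a s' *
          Var p
            (fun t' s₁ a₁ => normPol (fun a₂ =>
              π t' s₁ a₂ * Real.sqrt (uAux T p π r b (n - (t' - (t + 1))) t' s₁ a₂)) a₁)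
            n (t + 1) s'
            (Gest π
              (fun t' s₁ a₁ => normPol (fun a₂ =>
                π t' s₁ a₂ * Real.sqrt (uAux T p π r b (n - (t' - (t + 1))) t' s₁ a₂)) a₁)
              r b n (t + 1) s')
  termination_by n => n
  decreasing_by all_goals omega

/-- `u_{π,t}(s,a)` in the horizon-`T` MDP, with baseline `b`. -/
noncomputable def uf [Fintype S] [Fintype A] (T : ℕ) (p : S → A → S → ℝ)
    (π : ℕ → S → A → ℝ) (r : S → A → ℝ) (b : ℕ → S → A → ℝ) (t : ℕ) (s : S) (a : A) : ℝ :=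
  uAux T p π r b (T - 1 - t) t s a

/-- The optimal behavior policy `μ*_t(a|s) ∝ π_t(a|s) √(u_{π,t}(s,a))` tailored to the
baseline `b` (uniform when all the weights vanish). -/
noncomputable def mustar [Fintype S] [Fintype A] (T : ℕ) (p : S → A → S → ℝ)
    (π : ℕ → S → A → ℝ) (r : S → A → ℝ) (b : ℕ → S → A → ℝ) (t : ℕ) (s : S) (a : A) : ℝ :=
  normPol (fun a' => π t s a' * Real.sqrt (uf T p π r b t s a')) a

/-- Conditional expectation `E[G^b(τ^μ_{t:T-1}) | S_t = s]`. -/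
noncomputable def ExpG [Fintype S] [Fintype A] (T : ℕ) (p : S → A → S → ℝ)
    (π μ : ℕ → S → A → ℝ) (r : S → A → ℝ) (b : ℕ → S → A → ℝ) (t : ℕ) (s : S) : ℝ :=
  Exp p μ (T - 1 - t) t s (Gest π μ r b (T - 1 - t) t s)

/-- Conditional variance `Var(G^b(τ^μ_{t:T-1}) | S_t = s)`. -/
noncomputable def VarG [Fintype S] [Fintype A] (T : ℕ) (p : S → A → S → ℝ)
    (π μ : ℕ → S → A → ℝ) (r : S → A → ℝ) (b : ℕ → S → A → ℝ) (t : ℕ) (s : S) : ℝ :=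
  Var p μ (T - 1 - t) t s (Gest π μ r b (T - 1 - t) t s)

/-- Membership in the enlarged policy-search space
`Λ = {μ : ∀ t,s,a, μ_t(a|s) = 0 → π_t(a|s)·u_{π,t}(s,a) = 0}`. -/
def inLambda [Fintype S] [Fintype A] (T : ℕ) (p : S → A → S → ℝ)
    (π : ℕ → S → A → ℝ) (r : S → A → ℝ) (b : ℕ → S → A → ℝ) (μ : ℕ → S → A → ℝ) : Prop :=
  ∀ t s a, t < T → μ t s a = 0 → π t s a * uf T p π r b t s a = 0


/-- The optimal baseline `b*_t(s,a) = q_{π,t}(s,a)`. -/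
noncomputable def bstar [Fintype S] [Fintype A] (T : ℕ) (p : S → A → S → ℝ)
    (π : ℕ → S → A → ℝ) (r : S → A → ℝ) : ℕ → S → A → ℝ :=
  fun t s a => qf T p π r t s a

/-- The zero baseline: with it, `Gest` is the plain PDIS estimator `G^{PDIS}`. -/
def zerob : ℕ → S → A → ℝ := fun _ _ _ => 0

/-- `δ^{DR}_t(s)`: compounded future variance reduction of the doubly optimal estimator
relative to the doubly robust estimator run on-policy (baseline `b*`, behavior policy `π`). -/
noncomputable def deltaDR {S A : Type} [Fintype S] [Fintype A] [Nonempty A]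
    (T : ℕ) (p : S → A → S → ℝ) (π : ℕ → S → A → ℝ) (r : S → A → ℝ)
    (t : ℕ) (s : S) : ℝ :=
  if t + 2 ≤ T then
    ∑ a, π t s a * ∑ s', p s a s' *
      (VarG T p π π r (bstar T p π r) (t + 1) s' -
        VarG T p π (mustar T p π r (bstar T p π r)) r (bstar T p π r) (t + 1) s')
  else 0

section Aux

variable [Fintype S] [Fintype A]

/-- Jensen's inequality for the square function over a finite distribution. -/
lemma jensen_sq {ι : Type} [Fintype ι] (w x : ι → ℝ) (hw : ∀ i, 0 ≤ w i)
    (hw1 : ∑ i, w i = 1) : (∑ i, w i * x i) ^ 2 ≤ ∑ i, w i * x i ^ 2 := by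
  have h := Finset.sum_mul_sq_le_sq_mul_sq Finset.univ (fun i => Real.sqrt (w i))
    (fun i => Real.sqrt (w i) * x i)
  have e1 : ∀ i : ι, Real.sqrt (w i) * (Real.sqrt (w i) * x i) = w i * x i := by
    intro i; rw [← mul_assoc, Real.mul_self_sqrt (hw i)]
  have e2 : ∀ i : ι, Real.sqrt (w i) ^ 2 = w i := fun i => Real.sq_sqrt (hw i)
  have e3 : ∀ i : ι, (Real.sqrt (w i) * x i) ^ 2 = w i * x i ^ 2 := by
    intro i; rw [mul_pow, Real.sq_sqrt (hw i)]
  simp only [e1, e2, e3] at h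
  calc (∑ i, w i * x i) ^ 2 ≤ (∑ i, w i) * ∑ i, w i * x i ^ 2 := h
    _ = ∑ i, w i * x i ^ 2 := by rw [hw1, one_mul]

lemma Exp_add (p : S → A → S → ℝ) (μ : ℕ → S → A → ℝ) :
    ∀ (n t : ℕ) (s : S) (f g : Traj S A n → ℝ),
      Exp p μ n t s (fun τ => f τ + g τ) = Exp p μ n t s f + Exp p μ n t s g := by
  intro n
  induction n with
  | zero =>
    intro t s f g
    simp only [Exp, mul_add, Finset.sum_add_distrib]
  | succ n ih =>
    intro t s f g
    simp only [Exp]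
    rw [← Finset.sum_add_distrib]
    refine Finset.sum_congr rfl fun a _ => ?_
    rw [← mul_add, ← Finset.sum_add_distrib]
    congr 1
    refine Finset.sum_congr rfl fun s' _ => ?_
    rw [← mul_add, ih]

lemma Exp_smul (p : S → A → S → ℝ) (μ : ℕ → S → A → ℝ) :
    ∀ (n t : ℕ) (s : S) (c : ℝ) (f : Traj S A n → ℝ),
      Exp p μ n t s (fun τ => c * f τ) = c * Exp p μ n t s f := by
  intro n
  induction n with
  | zero =>
    intro t s c f
    simp only [Exp, Finset.mul_sum]
    exact Finset.sum_congr rfl fun a _ => by ring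
  | succ n ih =>
    intro t s c f
    simp only [Exp, Finset.mul_sum]
    refine Finset.sum_congr rfl fun a _ => ?_
    refine Finset.sum_congr rfl fun s' _ => ?_
    rw [ih]; ring

lemma Exp_const (p : S → A → S → ℝ) (μ : ℕ → S → A → ℝ)
    (hp : IsKernel p) (hμ : IsPolicy μ) :
    ∀ (n t : ℕ) (s : S) (c : ℝ), Exp p μ n t s (fun _ => c) = c := by
  intro n
  induction n with
  | zero =>
    intro t s c
    simp only [Exp, ← Finset.sum_mul, (hμ t s).2, one_mul]
  | succ n ih =>
    intro t s c
    simp only [Exp]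
    have : ∀ a : A, (∑ s', p s a s' * Exp p μ n (t+1) s' (fun _ => c)) = c := by
      intro a
      simp only [ih, ← Finset.sum_mul, (hp s a).2, one_mul]
    simp only [this, ← Finset.sum_mul, (hμ t s).2, one_mul]

lemma Exp_quad (p : S → A → S → ℝ) (μ : ℕ → S → A → ℝ)
    (hp : IsKernel p) (hμ : IsPolicy μ) (n t : ℕ) (s : S)
    (g : Traj S A n → ℝ) (α β γ : ℝ) :
    Exp p μ n t s (fun τ => α * (g τ) ^ 2 + β * g τ + γ)
      = α * Exp p μ n t s (fun τ => (g τ) ^ 2) + β * Exp p μ n t s g + γ := by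
  rw [Exp_add, Exp_add, Exp_smul, Exp_smul, Exp_const p μ hp hμ]

lemma Gest_congr (π : ℕ → S → A → ℝ) (r : S → A → ℝ) (b : ℕ → S → A → ℝ)
    (μ μ' : ℕ → S → A → ℝ) :
    ∀ (n t : ℕ), (∀ t', t ≤ t' → t' ≤ t + n → ∀ s a, μ t' s a = μ' t' s a) →
      ∀ (s : S) (τ : Traj S A n), Gest π μ r b n t s τ = Gest π μ' r b n t s τ := by
  intro n
  induction n with
  | zero =>
    intro t h s τ
    simp only [Gest, h t le_rfl le_rfl s τ]
  | succ n ih =>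
    intro t h s τ
    obtain ⟨a, s', τ'⟩ := τ
    simp only [Gest, h t le_rfl (by omega),
      ih (t+1) (fun t' h1 h2 s a => h t' (by omega) (by omega) s a) s' τ']

lemma Exp_congr (p : S → A → S → ℝ) (μ μ' : ℕ → S → A → ℝ) :
    ∀ (n t : ℕ), (∀ t', t ≤ t' → t' ≤ t + n → ∀ s a, μ t' s a = μ' t' s a) →
      ∀ (s : S) (f : Traj S A n → ℝ), Exp p μ n t s f = Exp p μ' n t s f := by
  intro n
  induction n with
  | zero =>
    intro t h s f
    simp only [Exp, h t le_rfl le_rfl]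
  | succ n ih =>
    intro t h s f
    simp only [Exp, h t le_rfl (by omega)]
    refine Finset.sum_congr rfl fun a _ => ?_
    congr 1
    refine Finset.sum_congr rfl fun s' _ => ?_
    rw [ih (t+1) (fun t' h1 h2 s a => h t' (by omega) (by omega) s a)]

lemma Var_congr (p : S → A → S → ℝ) (π : ℕ → S → A → ℝ) (r : S → A → ℝ)
    (b : ℕ → S → A → ℝ) (μ μ' : ℕ → S → A → ℝ) (n t : ℕ)
    (h : ∀ t', t ≤ t' → t' ≤ t + n → ∀ s a, μ t' s a = μ' t' s a) (s : S) :
    Var p μ n t s (Gest π μ r b n t s) = Var p μ' n t s (Gest π μ' r b n t s) := by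
  have hg : ∀ τ, Gest π μ r b n t s τ = Gest π μ' r b n t s τ := Gest_congr π r b μ μ' n t h s
  unfold Var
  rw [Exp_congr p μ μ' n t h, Exp_congr p μ μ' n t h]
  congr 1
  · exact congrArg _ (funext fun τ => by rw [hg])
  · exact congrArg (· ^ 2) (congrArg _ (funext fun τ => by rw [hg]))

lemma qf_succ (T : ℕ) (p : S → A → S → ℝ) (π : ℕ → S → A → ℝ) (r : S → A → ℝ)
    (t : ℕ) (h : t + 2 ≤ T) (s : S) (a : A) :
    qf T p π r t s a = r s a + ∑ s', p s a s' * vf T p π r (t + 1) s' := by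
  unfold qf vf qf
  have h1 : T - 1 - t = (T - 1 - (t + 1)) + 1 := by omega
  rw [h1]
  simp only [qval]

lemma qf_last (T : ℕ) (p : S → A → S → ℝ) (π : ℕ → S → A → ℝ) (r : S → A → ℝ)
    (t : ℕ) (h : T ≤ t + 1) (s : S) (a : A) : qf T p π r t s a = r s a := by
  unfold qf
  have h1 : T - 1 - t = 0 := by omega
  rw [h1]
  simp only [qval]

lemma Var_nonneg (p : S → A → S → ℝ) (μ : ℕ → S → A → ℝ)
    (hp : IsKernel p) (hμ : IsPolicy μ) :
    ∀ (n t : ℕ) (s : S) (f : Traj S A n → ℝ), 0 ≤ Var p μ n t s f := by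
  have key : ∀ (n t : ℕ) (s : S) (f : Traj S A n → ℝ),
      (Exp p μ n t s f) ^ 2 ≤ Exp p μ n t s (fun τ => (f τ) ^ 2) := by
    intro n
    induction n with
    | zero =>
      intro t s f
      exact jensen_sq (μ t s) f (hμ t s).1 (hμ t s).2
    | succ n ih =>
      intro t s f
      simp only [Exp]
      calc (∑ a, μ t s a * ∑ s', p s a s' * Exp p μ n (t+1) s' (fun τ => f (a, s', τ))) ^ 2
          ≤ ∑ a, μ t s a * (∑ s', p s a s' * Exp p μ n (t+1) s' (fun τ => f (a, s', τ))) ^ 2 :=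
            jensen_sq (μ t s) _ (hμ t s).1 (hμ t s).2
        _ ≤ ∑ a, μ t s a * ∑ s', p s a s' * Exp p μ n (t+1) s' (fun τ => (f (a, s', τ)) ^ 2) := by
            refine Finset.sum_le_sum fun a _ => mul_le_mul_of_nonneg_left ?_ ((hμ t s).1 a)
            calc (∑ s', p s a s' * Exp p μ n (t+1) s' (fun τ => f (a, s', τ))) ^ 2
                ≤ ∑ s', p s a s' * (Exp p μ n (t+1) s' (fun τ => f (a, s', τ))) ^ 2 :=
                  jensen_sq (p s a) _ (hp s a).1 (hp s a).2
              _ ≤ _ := Finset.sum_le_sum fun s' _ =>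
                  mul_le_mul_of_nonneg_left (ih (t+1) s' _) ((hp s a).1 s')
  intro n t s f
  have := key n t s f
  unfold Var
  linarith

lemma normPol_nonneg (w : A → ℝ) (hw : ∀ a, 0 ≤ w a) (a : A) : 0 ≤ normPol w a := by
  unfold normPol
  split
  · positivity
  · exact div_nonneg (hw a) (Finset.sum_nonneg fun a' _ => hw a')

lemma normPol_sum [Nonempty A] (w : A → ℝ) : ∑ a, normPol w a = 1 := by
  rcases eq_or_ne (∑ a', w a') 0 with h | h
  · have e : ∀ a : A, normPol w a = ((Fintype.card A : ℝ))⁻¹ := fun a => by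
      unfold normPol; rw [if_pos h]
    rw [Finset.sum_congr rfl (fun a _ => e a), Finset.sum_const, Finset.card_univ, nsmul_eq_mul,
      mul_inv_cancel₀]
    exact_mod_cast Fintype.card_ne_zero
  · have e : ∀ a : A, normPol w a = w a / ∑ a', w a' := fun a => by
      unfold normPol; rw [if_neg h]
    rw [Finset.sum_congr rfl (fun a _ => e a), ← Finset.sum_div, div_self h]

lemma mustar_isPolicy [Nonempty A] (T : ℕ) (p : S → A → S → ℝ) (π : ℕ → S → A → ℝ)
    (r : S → A → ℝ) (b : ℕ → S → A → ℝ) (hπ : IsPolicy π) :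
    IsPolicy (mustar T p π r b) := by
  intro t s
  constructor
  · intro a
    exact normPol_nonneg _ (fun a' => mul_nonneg ((hπ t s).1 a') (Real.sqrt_nonneg _)) a
  · exact normPol_sum _
lemma bbar_bstar (T : ℕ) (p : S → A → S → ℝ) (π : ℕ → S → A → ℝ) (r : S → A → ℝ)
    (t : ℕ) (s : S) : bbar π (bstar T p π r) t s = vf T p π r t s := rfl

lemma exp_Gest (T : ℕ) (p : S → A → S → ℝ) (π μ : ℕ → S → A → ℝ) (r : S → A → ℝ)
    (hp : IsKernel p) (hμ : IsPolicy μ) :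
    ∀ (n t : ℕ), t + n + 1 = T → ∀ s : S,
      Exp p μ n t s (Gest π μ r (bstar T p π r) n t s) = vf T p π r t s := by
  intro n
  induction n with
  | zero =>
    intro t h s
    have hq : ∀ a, bstar T p π r t s a = r s a := fun a => qf_last T p π r t (by omega) s a
    simp only [Exp, Gest]
    have e : ∀ a : A, μ t s a * (π t s a / μ t s a * (r s a - bstar T p π r t s a)
        + bbar π (bstar T p π r) t s) = μ t s a * bbar π (bstar T p π r) t s := by
      intro a; rw [hq a, sub_self, mul_zero, zero_add]
    rw [Finset.sum_congr rfl (fun a _ => e a), ← Finset.sum_mul, (hμ t s).2, one_mul,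
      bbar_bstar]
  | succ n ih =>
    intro t h s
    have hq : qf T p π r t s = fun a => r s a + ∑ s', p s a s' * vf T p π r (t + 1) s' :=
      funext fun a => qf_succ T p π r t (by omega) s a
    simp only [Exp, Gest]
    have e : ∀ a : A, (∑ s', p s a s' * Exp p μ n (t+1) s'
        (fun τ => π t s a / μ t s a * (r s a + Gest π μ r (bstar T p π r) n (t+1) s' τ
          - bstar T p π r t s a) + bbar π (bstar T p π r) t s))
        = bbar π (bstar T p π r) t s := by
      intro a
      have e2 : ∀ s' : S, Exp p μ n (t+1) s'
          (fun τ => π t s a / μ t s a * (r s a + Gest π μ r (bstar T p π r) n (t+1) s' τ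
            - bstar T p π r t s a) + bbar π (bstar T p π r) t s)
          = π t s a / μ t s a * (r s a + vf T p π r (t+1) s' - bstar T p π r t s a)
            + bbar π (bstar T p π r) t s := by
        intro s'
        have : (fun τ => π t s a / μ t s a * (r s a + Gest π μ r (bstar T p π r) n (t+1) s' τ
              - bstar T p π r t s a) + bbar π (bstar T p π r) t s)
            = fun τ => (π t s a / μ t s a) * Gest π μ r (bstar T p π r) n (t+1) s' τ
              + (π t s a / μ t s a * (r s a - bstar T p π r t s a)
                  + bbar π (bstar T p π r) t s) := by
          funext τ; ring
        rw [this, Exp_add, Exp_smul, Exp_const p μ hp hμ, ih (t+1) (by omega) s']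
        ring
      rw [Finset.sum_congr rfl (fun s' _ => by rw [e2 s'])]
      have expand : ∀ s' : S, p s a s' * (π t s a / μ t s a
            * (r s a + vf T p π r (t+1) s' - bstar T p π r t s a)
            + bbar π (bstar T p π r) t s)
          = (π t s a / μ t s a) * (p s a s' * vf T p π r (t+1) s')
            + p s a s' * (π t s a / μ t s a * (r s a - bstar T p π r t s a)
              + bbar π (bstar T p π r) t s) := by intro s'; ring
      rw [Finset.sum_congr rfl (fun s' _ => expand s'), Finset.sum_add_distrib,
        ← Finset.mul_sum, ← Finset.sum_mul, (hp s a).2, one_mul]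
      show π t s a / μ t s a * ∑ s', p s a s' * vf T p π r (t + 1) s'
        + (π t s a / μ t s a * (r s a - qf T p π r t s a) + bbar π (bstar T p π r) t s) = _
      rw [hq]
      ring
    rw [Finset.sum_congr rfl (fun a _ => by rw [e a]), ← Finset.sum_mul, (hμ t s).2, one_mul,
      bbar_bstar]

lemma var_Gest (T : ℕ) (p : S → A → S → ℝ) (π μ : ℕ → S → A → ℝ) (r : S → A → ℝ)
    (hp : IsKernel p) (hμ : IsPolicy μ)
    (n t : ℕ) (h : t + n + 2 = T) (s : S) :
    Var p μ (n+1) t s (Gest π μ r (bstar T p π r) (n+1) t s)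
      = ∑ a, μ t s a * (π t s a / μ t s a) ^ 2 *
          (nuf T p π r t s a +
            ∑ s', p s a s' * Var p μ n (t+1) s' (Gest π μ r (bstar T p π r) n (t+1) s')) := by
  have hE1 : ∀ s' : S, Exp p μ n (t+1) s' (Gest π μ r (bstar T p π r) n (t+1) s')
      = vf T p π r (t+1) s' := fun s' => exp_Gest T p π μ r hp hμ n (t+1) (by omega) s'
  have hq : qf T p π r t s = fun a => r s a + ∑ s', p s a s' * vf T p π r (t + 1) s' :=
    funext fun a => qf_succ T p π r t (by omega) s a
  have key : ∀ a : A, (∑ s', p s a s' * Exp p μ n (t+1) s'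
      (fun τ => (Gest π μ r (bstar T p π r) (n+1) t s (a, s', τ)) ^ 2))
      = (π t s a / μ t s a) ^ 2 *
          (nuf T p π r t s a +
            ∑ s', p s a s' * Var p μ n (t+1) s' (Gest π μ r (bstar T p π r) n (t+1) s'))
        + (vf T p π r t s) ^ 2 := by
    intro a
    set c := π t s a / μ t s a with hc
    set B := vf T p π r t s with hB
    set d := r s a - qf T p π r t s a with hd
    set m := ∑ s', p s a s' * vf T p π r (t+1) s' with hm
    have hdm : d = -m := by rw [hd, hq]; ring
    have inner : ∀ s' : S, Exp p μ n (t+1) s'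
        (fun τ => (Gest π μ r (bstar T p π r) (n+1) t s (a, s', τ)) ^ 2)
        = c ^ 2 * Exp p μ n (t+1) s' (fun τ => (Gest π μ r (bstar T p π r) n (t+1) s' τ) ^ 2)
          + (2 * c ^ 2 * d + 2 * c * B) * vf T p π r (t+1) s'
          + (c ^ 2 * d ^ 2 + 2 * c * d * B + B ^ 2) := by
      intro s'
      have e : (fun τ => (Gest π μ r (bstar T p π r) (n+1) t s (a, s', τ)) ^ 2)
          = fun τ => c ^ 2 * (Gest π μ r (bstar T p π r) n (t+1) s' τ) ^ 2
            + (2 * c ^ 2 * d + 2 * c * B) * Gest π μ r (bstar T p π r) n (t+1) s' τ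
            + (c ^ 2 * d ^ 2 + 2 * c * d * B + B ^ 2) := by
        funext τ
        show (c * (r s a + Gest π μ r (bstar T p π r) n (t+1) s' τ - bstar T p π r t s a)
          + bbar π (bstar T p π r) t s) ^ 2 = _
        rw [bbar_bstar, ← hB]
        show (c * (r s a + Gest π μ r (bstar T p π r) n (t+1) s' τ - qf T p π r t s a)
          + B) ^ 2 = _
        rw [show r s a + Gest π μ r (bstar T p π r) n (t+1) s' τ - qf T p π r t s a
          = Gest π μ r (bstar T p π r) n (t+1) s' τ + d from by rw [hd]; ring]
        ring
      rw [e, Exp_quad p μ hp hμ, hE1 s']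
    rw [Finset.sum_congr rfl (fun s' _ => by rw [inner s'])]
    have split : ∀ s' : S, p s a s' *
        (c ^ 2 * Exp p μ n (t+1) s' (fun τ => (Gest π μ r (bstar T p π r) n (t+1) s' τ) ^ 2)
          + (2 * c ^ 2 * d + 2 * c * B) * vf T p π r (t+1) s'
          + (c ^ 2 * d ^ 2 + 2 * c * d * B + B ^ 2))
        = c ^ 2 * (p s a s' *
            Exp p μ n (t+1) s' (fun τ => (Gest π μ r (bstar T p π r) n (t+1) s' τ) ^ 2))
          + (2 * c ^ 2 * d + 2 * c * B) * (p s a s' * vf T p π r (t+1) s')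
          + (c ^ 2 * d ^ 2 + 2 * c * d * B + B ^ 2) * p s a s' := by
      intro s'; ring
    rw [Finset.sum_congr rfl (fun s' _ => split s'), Finset.sum_add_distrib,
      Finset.sum_add_distrib, ← Finset.mul_sum, ← Finset.mul_sum, ← Finset.mul_sum,
      (hp s a).2, mul_one]
    have hnuf : nuf T p π r t s a
        = (∑ s', p s a s' * (vf T p π r (t+1) s') ^ 2) - m ^ 2 := by
      unfold nuf; rw [if_pos (by omega : t + 2 ≤ T)]
    have hVs : (∑ s', p s a s' * Var p μ n (t+1) s' (Gest π μ r (bstar T p π r) n (t+1) s'))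
        = (∑ s', p s a s' * Exp p μ n (t+1) s'
            (fun τ => (Gest π μ r (bstar T p π r) n (t+1) s' τ) ^ 2))
          - ∑ s', p s a s' * (vf T p π r (t+1) s') ^ 2 := by
      rw [← Finset.sum_sub_distrib]
      refine Finset.sum_congr rfl fun s' _ => ?_
      unfold Var
      rw [hE1 s']
      ring
    rw [hnuf, hVs, hdm]
    ring
  have hEsq : Exp p μ (n+1) t s (fun τ => (Gest π μ r (bstar T p π r) (n+1) t s τ) ^ 2)
      = (∑ a, μ t s a * (π t s a / μ t s a) ^ 2 *
          (nuf T p π r t s a +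
            ∑ s', p s a s' * Var p μ n (t+1) s' (Gest π μ r (bstar T p π r) n (t+1) s')))
        + (vf T p π r t s) ^ 2 := by
    calc Exp p μ (n+1) t s (fun τ => (Gest π μ r (bstar T p π r) (n+1) t s τ) ^ 2)
        = ∑ a, μ t s a * ∑ s', p s a s' * Exp p μ n (t+1) s'
            (fun τ => (Gest π μ r (bstar T p π r) (n+1) t s (a, s', τ)) ^ 2) := rfl
      _ = ∑ a, μ t s a * ((π t s a / μ t s a) ^ 2 *
            (nuf T p π r t s a +
              ∑ s', p s a s' * Var p μ n (t+1) s' (Gest π μ r (bstar T p π r) n (t+1) s'))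
            + (vf T p π r t s) ^ 2) :=
          Finset.sum_congr rfl fun a _ => by rw [key a]
      _ = _ := by
          rw [Finset.sum_congr rfl (fun a _ => mul_add (μ t s a) _ ((vf T p π r t s) ^ 2)),
            Finset.sum_add_distrib, ← Finset.sum_mul, (hμ t s).2, one_mul]
          congr 1
          exact Finset.sum_congr rfl fun a _ => by ring
  have hE : Exp p μ (n+1) t s (Gest π μ r (bstar T p π r) (n+1) t s) = vf T p π r t s :=
    exp_Gest T p π μ r hp hμ (n+1) t (by omega) s
  conv_lhs => unfold Var
  rw [hEsq, hE]
  ring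
lemma uf_succ [Nonempty A] (T : ℕ) (p : S → A → S → ℝ) (π : ℕ → S → A → ℝ)
    (r : S → A → ℝ) (n t : ℕ) (h : t + n + 2 = T) (s : S) (a : A) :
    uf T p π r (bstar T p π r) t s a
      = nuf T p π r t s a + ∑ s', p s a s' *
          Var p (mustar T p π r (bstar T p π r)) n (t+1) s'
            (Gest π (mustar T p π r (bstar T p π r)) r (bstar T p π r) n (t+1) s') := by
  unfold uf
  rw [show T - 1 - t = n + 1 from by omega]
  rw [uAux]
  rw [show qf T p π r t s a - bstar T p π r t s a = 0 from sub_self _, zero_pow (by norm_num),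
    zero_add]
  congr 1
  refine Finset.sum_congr rfl fun s' _ => ?_
  congr 1
  exact Var_congr p π r (bstar T p π r) _ _ n (t+1)
    (fun t' h1 h2 s₁ a₁ => by
      have he : n - (t' - (t + 1)) = T - 1 - t' := by omega
      unfold mustar uf
      rw [he]) s'

lemma uf_last (T : ℕ) (p : S → A → S → ℝ) (π : ℕ → S → A → ℝ)
    (r : S → A → ℝ) (t : ℕ) (h : T ≤ t + 1) (s : S) (a : A) :
    uf T p π r (bstar T p π r) t s a = 0 := by
  unfold uf
  rw [show T - 1 - t = 0 from by omega]
  rw [uAux]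
  rw [show qf T p π r t s a - bstar T p π r t s a = 0 from sub_self _]
  norm_num

lemma nuf_nonneg (T : ℕ) (p : S → A → S → ℝ) (π : ℕ → S → A → ℝ)
    (r : S → A → ℝ) (hp : IsKernel p) (t : ℕ) (s : S) (a : A) :
    0 ≤ nuf T p π r t s a := by
  unfold nuf
  split
  · have := jensen_sq (p s a) (vf T p π r (t+1)) (hp s a).1 (hp s a).2
    linarith
  · exact le_refl 0

lemma uf_nonneg [Nonempty A] (T : ℕ) (p : S → A → S → ℝ) (π : ℕ → S → A → ℝ)
    (r : S → A → ℝ) (hp : IsKernel p) (hπ : IsPolicy π)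
    (n t : ℕ) (h : t + n + 1 = T) (s : S) (a : A) :
    0 ≤ uf T p π r (bstar T p π r) t s a := by
  cases n with
  | zero => rw [uf_last T p π r t (by omega) s a]
  | succ n =>
    rw [uf_succ T p π r n t (by omega) s a]
    have h1 := nuf_nonneg T p π r hp t s a
    have h2 : 0 ≤ ∑ s', p s a s' *
        Var p (mustar T p π r (bstar T p π r)) n (t+1) s'
          (Gest π (mustar T p π r (bstar T p π r)) r (bstar T p π r) n (t+1) s') :=
      Finset.sum_nonneg fun s' _ => mul_nonneg ((hp s a).1 s')
        (Var_nonneg p _ hp (mustar_isPolicy T p π r _ hπ) n (t+1) s' _)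
    linarith

lemma pi_sum (π : ℕ → S → A → ℝ) (hπ : IsPolicy π) (t : ℕ) (s : S) (D : A → ℝ) :
    ∑ a, π t s a * (π t s a / π t s a) ^ 2 * D a = ∑ a, π t s a * D a := by
  refine Finset.sum_congr rfl fun a _ => ?_
  rcases eq_or_ne (π t s a) 0 with h | h
  · rw [h]; ring
  · rw [div_self h]; ring

lemma key_sum [Nonempty A] (c u : A → ℝ) (hc : ∀ a, 0 ≤ c a) (hu : ∀ a, 0 ≤ u a) :
    ∑ a, normPol (fun a' => c a' * Real.sqrt (u a')) a *
        (c a / normPol (fun a' => c a' * Real.sqrt (u a')) a) ^ 2 * u a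
      = (∑ a, c a * Real.sqrt (u a)) ^ 2 := by
  set w : A → ℝ := fun a => c a * Real.sqrt (u a) with hw
  have hwn : ∀ a, 0 ≤ w a := fun a => mul_nonneg (hc a) (Real.sqrt_nonneg _)
  have hsq : ∀ a, c a ^ 2 * u a = w a ^ 2 := by
    intro a
    rw [hw]
    simp only [mul_pow, Real.sq_sqrt (hu a)]
  rcases eq_or_ne (∑ a', w a') 0 with h | h
  · have hall : ∀ a, w a = 0 := by
      intro a
      have := (Finset.sum_eq_zero_iff_of_nonneg (fun a _ => hwn a)).1 h
      exact this a (Finset.mem_univ a)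
    rw [h]
    have e : ∀ a : A, normPol w a * (c a / normPol w a) ^ 2 * u a = 0 := by
      intro a
      have hcu : c a ^ 2 * u a = 0 := by rw [hsq a, hall a]; ring
      rw [div_pow]
      rw [show normPol w a * (c a ^ 2 / normPol w a ^ 2) * u a
        = (c a ^ 2 * u a) * (normPol w a / normPol w a ^ 2) from by ring, hcu, zero_mul]
    rw [Finset.sum_congr rfl fun a _ => e a]
    simp
  · have e : ∀ a : A, normPol w a * (c a / normPol w a) ^ 2 * u a
        = (∑ a', w a') * w a := by
      intro a
      have hnp : normPol w a = w a / ∑ a', w a' := by unfold normPol; rw [if_neg h]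
      rcases eq_or_ne (w a) 0 with hwa | hwa
      · rw [hnp, hwa, zero_div]
        simp
      · rw [hnp, div_div_eq_mul_div]
        have e2 : (w a / (∑ a', w a')) * (c a * (∑ a', w a') / w a) ^ 2 * u a
            = (c a ^ 2 * u a) * (∑ a', w a') / w a := by
          field_simp
        rw [e2, hsq a]
        field_simp
    rw [Finset.sum_congr rfl fun a _ => e a, ← Finset.mul_sum]
    ring

lemma VarG_last (T : ℕ) (p : S → A → S → ℝ) (π μ : ℕ → S → A → ℝ) (r : S → A → ℝ)
    (hμ : IsPolicy μ) (t : ℕ) (h1 : t + 1 = T) (s : S) :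
    VarG T p π μ r (bstar T p π r) t s = 0 := by
  unfold VarG
  rw [show T - 1 - t = 0 from by omega]
  unfold Var
  have e : ∀ a : A, Gest π μ r (bstar T p π r) 0 t s a = bbar π (bstar T p π r) t s := by
    intro a
    show π t s a / μ t s a * (r s a - bstar T p π r t s a) + bbar π (bstar T p π r) t s = _
    rw [show bstar T p π r t s a = r s a from qf_last T p π r t (by omega) s a, sub_self,
      mul_zero, zero_add]
  simp only [Exp, e]
  rw [← Finset.sum_mul, (hμ t s).2, one_mul, ← Finset.sum_mul, (hμ t s).2, one_mul, sub_self]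
lemma main_ind [Nonempty A] (T : ℕ) (p : S → A → S → ℝ) (π : ℕ → S → A → ℝ)
    (r : S → A → ℝ) (hp : IsKernel p) (hπ : IsPolicy π) :
    ∀ n t, t + n + 1 = T → ∀ s : S,
      (VarG T p π π r (bstar T p π r) t s -
        VarG T p π (mustar T p π r (bstar T p π r)) r (bstar T p π r) t s =
        ((∑ a, π t s a * Real.sqrt (uf T p π r (bstar T p π r) t s a) ^ 2) -
          (∑ a, π t s a * Real.sqrt (uf T p π r (bstar T p π r) t s a)) ^ 2) +
          deltaDR T p π r t s) ∧ 0 ≤ deltaDR T p π r t s := by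
  intro n
  induction n with
  | zero =>
    intro t h s
    have hδ : deltaDR T p π r t s = 0 := by unfold deltaDR; rw [if_neg (by omega)]
    have hu : ∀ a : A, uf T p π r (bstar T p π r) t s a = 0 :=
      fun a => uf_last T p π r t (by omega) s a
    constructor
    · rw [VarG_last T p π π r hπ t (by omega) s,
        VarG_last T p π _ r (mustar_isPolicy T p π r _ hπ) t (by omega) s, hδ]
      simp [hu]
    · rw [hδ]
  | succ n ih =>
    intro t h s
    set b := bstar T p π r with hb
    set μs := mustar T p π r b with hμs
    have hμsP : IsPolicy μs := mustar_isPolicy T p π r b hπ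
    have hVG1π : ∀ s' : S, VarG T p π π r b (t+1) s'
        = Var p π n (t+1) s' (Gest π π r b n (t+1) s') := by
      intro s'; unfold VarG; rw [show T - 1 - (t+1) = n from by omega]
    have hVG1μ : ∀ s' : S, VarG T p π μs r b (t+1) s'
        = Var p μs n (t+1) s' (Gest π μs r b n (t+1) s') := by
      intro s'; unfold VarG; rw [show T - 1 - (t+1) = n from by omega]
    have diff_nonneg : ∀ s' : S,
        0 ≤ VarG T p π π r b (t+1) s' - VarG T p π μs r b (t+1) s' := by
      intro s'
      obtain ⟨hid, hδ'⟩ := ih (t+1) (by omega) s'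
      rw [hid]
      have hj := jensen_sq (π (t+1) s')
        (fun a => Real.sqrt (uf T p π r b (t+1) s' a)) (hπ (t+1) s').1 (hπ (t+1) s').2
      linarith
    have hδpos : 0 ≤ deltaDR T p π r t s := by
      unfold deltaDR
      rw [if_pos (by omega : t + 2 ≤ T)]
      refine Finset.sum_nonneg fun a _ => mul_nonneg ((hπ t s).1 a) ?_
      exact Finset.sum_nonneg fun s' _ => mul_nonneg ((hp s a).1 s') (diff_nonneg s')
    refine ⟨?_, hδpos⟩
    have hu_eq : ∀ a : A, uf T p π r b t s a
        = nuf T p π r t s a +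
            ∑ s', p s a s' * Var p μs n (t+1) s' (Gest π μs r b n (t+1) s') :=
      fun a => uf_succ T p π r n t (by omega) s a
    have hu_nonneg : ∀ a : A, 0 ≤ uf T p π r b t s a :=
      fun a => uf_nonneg T p π r hp hπ (n+1) t (by omega) s a
    have hVπ : VarG T p π π r b t s
        = ∑ a, π t s a * (nuf T p π r t s a +
            ∑ s', p s a s' * Var p π n (t+1) s' (Gest π π r b n (t+1) s')) := by
      unfold VarG
      rw [show T - 1 - t = n + 1 from by omega,
        var_Gest T p π π r hp hπ n t (by omega) s, pi_sum π hπ t s]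
    have hVμ : VarG T p π μs r b t s
        = (∑ a, π t s a * Real.sqrt (uf T p π r b t s a)) ^ 2 := by
      unfold VarG
      rw [show T - 1 - t = n + 1 from by omega,
        var_Gest T p π μs r hp hμsP n t (by omega) s]
      rw [Finset.sum_congr rfl fun a (_ : a ∈ Finset.univ) => by rw [← hu_eq a]]
      exact key_sum (π t s) (uf T p π r b t s) (hπ t s).1 hu_nonneg
    have hsum : ∑ a, π t s a * Real.sqrt (uf T p π r b t s a) ^ 2
        = ∑ a, π t s a * (nuf T p π r t s a +
            ∑ s', p s a s' * Var p μs n (t+1) s' (Gest π μs r b n (t+1) s')) :=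
      Finset.sum_congr rfl fun a _ => by rw [Real.sq_sqrt (hu_nonneg a), hu_eq a]
    have hδeq : deltaDR T p π r t s
        = ∑ a, π t s a * ((∑ s', p s a s' * Var p π n (t+1) s' (Gest π π r b n (t+1) s'))
            - ∑ s', p s a s' * Var p μs n (t+1) s' (Gest π μs r b n (t+1) s')) := by
      unfold deltaDR
      rw [if_pos (by omega : t + 2 ≤ T)]
      refine Finset.sum_congr rfl fun a _ => ?_
      congr 1
      rw [← Finset.sum_sub_distrib]
      refine Finset.sum_congr rfl fun s' _ => ?_
      rw [hVG1π s', hVG1μ s']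
      ring
    rw [hVπ, hVμ, hsum, hδeq]
    have merge : (∑ a, π t s a * (nuf T p π r t s a +
            ∑ s', p s a s' * Var p μs n (t+1) s' (Gest π μs r b n (t+1) s')))
        + ∑ a, π t s a * ((∑ s', p s a s' * Var p π n (t+1) s' (Gest π π r b n (t+1) s'))
            - ∑ s', p s a s' * Var p μs n (t+1) s' (Gest π μs r b n (t+1) s'))
        = ∑ a, π t s a * (nuf T p π r t s a +
            ∑ s', p s a s' * Var p π n (t+1) s' (Gest π π r b n (t+1) s')) := by
      rw [← Finset.sum_add_distrib]
      exact Finset.sum_congr rfl fun a _ => by ring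
    linarith [merge]
end Aux
/-- Comparison with the doubly robust estimator run on-policy: with
`b*_t(s,a) = q_{π,t}(s,a)`, `μ* = μ^{*,b*}` and `u^{b*}` the function `u` for `b*`, for every
`t` and `s`,
`Var(G^{b*}(τ^π_{t:T−1})|S_t=s) − Var(G^{b*}(τ^{μ*}_{t:T−1})|S_t=s)
  = Var_{a∼π_t(·|s)}(√(u^{b*}_t(s,a))) + δ^{DR}_t(s)`,
and moreover `δ^{DR}_t(s) ≥ 0`. -/
theorem comparison_with_dr {S A : Type} [Fintype S] [Fintype A] [Nonempty A]
    (T : ℕ) (hT : 1 ≤ T)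
    (p : S → A → S → ℝ) (hp : IsKernel p)
    (r : S → A → ℝ)
    (π : ℕ → S → A → ℝ) (hπ : IsPolicy π)
    (t : ℕ) (ht : t < T) (s : S) :
    (VarG T p π π r (bstar T p π r) t s -
        VarG T p π (mustar T p π r (bstar T p π r)) r (bstar T p π r) t s =
      ((∑ a, π t s a * Real.sqrt (uf T p π r (bstar T p π r) t s a) ^ 2) -
          (∑ a, π t s a * Real.sqrt (uf T p π r (bstar T p π r) t s a)) ^ 2) +
        deltaDR T p π r t s) ∧
    0 ≤ deltaDR T p π r t s := by
  exact main_ind T p π r hp hπ (T - 1 - t) t (by omega) s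

end DOpt
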